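/- Let d ≥ 1, let F : ℝ^d → ℝ be L-Lipschitz continuous for some L > 0, and let h > 0. Define the smoothed function F_h(x) := (1/vol(B^d)) ∫_{B^d} F(x + h u) du, where B^d is the closed unit ball in ℝ^d. Then F_h is differentiable at every point of ℝ^d (even when F itself is not differentiable). -/

import Mathlib

open MeasureTheory Metric

/-- The `i`-th column of the matrix `G`, i.e. `G eᵢ`, viewed as a vector of `ℝ^d`. -/
noncomputable def gcol {d : ℕ} (G : Matrix (Fin d) (Fin d) ℝ) (i : Fin d) :
    EuclideanSpace ℝ (Fin d) := WithLp.toLp 2 (fun j => G j i)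

/-- The structured forward finite-difference gradient surrogate
`g_{(G,h)}(v) := (d/ℓ) · Σ_{i=1}^{ℓ} ((F(v + h·G eᵢ) − F(v))/h) · G eᵢ`. -/
noncomputable def fdSurrogate {d : ℕ} (F : EuclideanSpace ℝ (Fin d) → ℝ) (h : ℝ)
    (G : Matrix (Fin d) (Fin d) ℝ) (ℓ : ℕ) (v : EuclideanSpace ℝ (Fin d)) :
    EuclideanSpace ℝ (Fin d) :=
  ((d : ℝ) / (ℓ : ℝ)) •
    ∑ i ∈ Finset.univ.filter (fun i : Fin d => (i : ℕ) < ℓ),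
      ((F (v + h • gcol G i) - F v) / h) • gcol G i

/-- The ball-smoothing `F_h(x) := (1/vol(B^d)) ∫_{B^d} F(x + h u) du`. -/
noncomputable def ballSmooth {d : ℕ} (F : EuclideanSpace ℝ (Fin d) → ℝ) (h : ℝ)
    (x : EuclideanSpace ℝ (Fin d)) : ℝ :=
  (volume (closedBall (0 : EuclideanSpace ℝ (Fin d)) 1)).toReal⁻¹ *
    ∫ u in closedBall (0 : EuclideanSpace ℝ (Fin d)) 1, F (x + h • u)

/-- the ball-smoothing `F_h` of an `L`-Lipschitz function `F` is
differentiable at every point of `ℝ^d`. -/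
theorem ballSmooth_differentiable {d : ℕ} (hd : 1 ≤ d)
    (F : EuclideanSpace ℝ (Fin d) → ℝ) (L : ℝ) (hL : 0 < L)
    (hlip : ∀ x y : EuclideanSpace ℝ (Fin d), |F x - F y| ≤ L * ‖x - y‖)
    (h : ℝ) (hh : 0 < h) :
    ∀ x : EuclideanSpace ℝ (Fin d), DifferentiableAt ℝ (ballSmooth F h) x := by
  classical
  intro x
  have lipF : LipschitzWith (Real.toNNReal L) F := by
    apply LipschitzWith.of_dist_le_mul
    intro a b
    simpa [Real.dist_eq, dist_eq_norm, Real.coe_toNNReal _ hL.le] using hlip a b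
  have hFcont : Continuous F := lipF.continuous
  set B : Set (EuclideanSpace ℝ (Fin d)) := closedBall 0 1 with hB
  have hBcomp : IsCompact B := isCompact_closedBall _ _
  have hBfin : volume B ≠ ⊤ := measure_closedBall_lt_top.ne
  set c : ℝ := (volume B).toReal⁻¹ with hc
  -- norm bound on fderiv (everywhere, junk value is 0)
  have hDle : ∀ y : EuclideanSpace ℝ (Fin d), ‖fderiv ℝ F y‖ ≤ L := by
    intro y
    have := norm_fderiv_le_of_lipschitz ℝ (x₀ := y) lipF
    simpa [Real.coe_toNNReal _ hL.le] using this
  -- measurability of the affine map u ↦ x + h • u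
  have hAffMeas : Measurable (fun u : EuclideanSpace ℝ (Fin d) => x + h • u) :=
    measurable_const.add (measurable_id.const_smul h)
  have hAffCont : ∀ z : EuclideanSpace ℝ (Fin d),
      Continuous (fun u : EuclideanSpace ℝ (Fin d) => z + h • u) := fun z =>
    continuous_const.add (continuous_id.const_smul h)
  -- a.e. u in B, F is differentiable at x + h • u
  have hae : ∀ᵐ u ∂(volume.restrict B), DifferentiableAt ℝ F (x + h • u) := by
    apply ae_restrict_of_ae
    have h1 : ∀ᵐ y ∂(volume : Measure (EuclideanSpace ℝ (Fin d))), DifferentiableAt ℝ F y :=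
      lipF.ae_differentiableAt
    rw [ae_iff] at h1 ⊢
    have hset : {u : EuclideanSpace ℝ (Fin d) | ¬ DifferentiableAt ℝ F (x + h • u)}
        = (fun u : EuclideanSpace ℝ (Fin d) => h • u) ⁻¹'
          ((fun v : EuclideanSpace ℝ (Fin d) => x + v) ⁻¹'
            {y : EuclideanSpace ℝ (Fin d) | ¬ DifferentiableAt ℝ F y}) := rfl
    rw [hset, Measure.addHaar_preimage_smul volume hh.ne',
      measure_preimage_add volume x _, h1, mul_zero]
  -- integrability facts
  have hFint : ∀ z : EuclideanSpace ℝ (Fin d),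
      IntegrableOn (fun u : EuclideanSpace ℝ (Fin d) => F (z + h • u)) B volume := by
    intro z
    exact (hFcont.comp (hAffCont z)).continuousOn.integrableOn_compact hBcomp
  have hDmeas : AEStronglyMeasurable
      (fun u : EuclideanSpace ℝ (Fin d) => fderiv ℝ F (x + h • u)) volume :=
    ((measurable_fderiv ℝ F).comp hAffMeas).aestronglyMeasurable
  have hDint : IntegrableOn (fun u : EuclideanSpace ℝ (Fin d) => fderiv ℝ F (x + h • u)) B
      volume := by
    apply Measure.integrableOn_of_bounded hBfin hDmeas (M := L)
    filter_upwards with u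
    exact hDle _
  set J : EuclideanSpace ℝ (Fin d) →L[ℝ] ℝ := ∫ u in B, fderiv ℝ F (x + h • u) with hJ
  -- the remainder function
  set φ : EuclideanSpace ℝ (Fin d) → EuclideanSpace ℝ (Fin d) → ℝ :=
    fun x' u => F (x' + h • u) - F (x + h • u) - fderiv ℝ F (x + h • u) (x' - x) with hφ
  set g : EuclideanSpace ℝ (Fin d) → EuclideanSpace ℝ (Fin d) → ℝ :=
    fun x' u => ‖x' - x‖⁻¹ * |φ x' u| with hg
  -- key identity
  have key : ∀ x' : EuclideanSpace ℝ (Fin d),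
      ballSmooth F h x' - ballSmooth F h x - (c • J) (x' - x) = c * ∫ u in B, φ x' u := by
    intro x'
    have happ : (J : EuclideanSpace ℝ (Fin d) →L[ℝ] ℝ) (x' - x)
        = ∫ u in B, fderiv ℝ F (x + h • u) (x' - x) :=
      ContinuousLinearMap.integral_apply hDint (x' - x)
    have hI3 : IntegrableOn (fun u : EuclideanSpace ℝ (Fin d) => fderiv ℝ F (x + h • u) (x' - x))
        B volume := hDint.apply_continuousLinearMap (x' - x)
    have h12 : IntegrableOn (fun u : EuclideanSpace ℝ (Fin d) =>
        F (x' + h • u) - F (x + h • u)) B volume := (hFint x').sub (hFint x)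
    have e1 : (∫ u in B, φ x' u)
        = (∫ u in B, (F (x' + h • u) - F (x + h • u)))
          - ∫ u in B, fderiv ℝ F (x + h • u) (x' - x) := integral_sub h12 hI3
    have e2 : (∫ u in B, (F (x' + h • u) - F (x + h • u)))
        = (∫ u in B, F (x' + h • u)) - ∫ u in B, F (x + h • u) :=
      integral_sub (hFint x') (hFint x)
    rw [e1, e2]
    simp only [ballSmooth, ContinuousLinearMap.smul_apply, smul_eq_mul, happ]
    rw [← hB, ← hc]
    ring
  -- the integral of g tends to 0
  have hDCT : Filter.Tendsto (fun x' : EuclideanSpace ℝ (Fin d) => ∫ u in B, g x' u)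
      (nhds x) (nhds 0) := by
    have h0 : (0 : ℝ) = ∫ (_ : EuclideanSpace ℝ (Fin d)) in B, (0 : ℝ) := by simp
    rw [h0]
    apply tendsto_integral_filter_of_dominated_convergence (bound := fun _ => 2 * L)
    · filter_upwards with x'
      have m1 : AEStronglyMeasurable (fun u : EuclideanSpace ℝ (Fin d) => F (x' + h • u))
          (volume.restrict B) := ((hFcont.comp (hAffCont x')).aestronglyMeasurable).restrict
      have m2 : AEStronglyMeasurable (fun u : EuclideanSpace ℝ (Fin d) => F (x + h • u))
          (volume.restrict B) := ((hFcont.comp (hAffCont x)).aestronglyMeasurable).restrict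
      have m3 : AEStronglyMeasurable
          (fun u : EuclideanSpace ℝ (Fin d) => fderiv ℝ F (x + h • u) (x' - x))
          (volume.restrict B) := (hDmeas.apply_continuousLinearMap (x' - x)).restrict
      have mφ : AEStronglyMeasurable (φ x') (volume.restrict B) := (m1.sub m2).sub m3
      exact mφ.norm.const_mul _
    · filter_upwards with x'
      filter_upwards with u
      have h1 : |F (x' + h • u) - F (x + h • u)| ≤ L * ‖x' - x‖ := by
        have := hlip (x' + h • u) (x + h • u)
        simpa [add_sub_add_right_eq_sub] using this
      have h2 : |fderiv ℝ F (x + h • u) (x' - x)| ≤ L * ‖x' - x‖ := by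
        calc |fderiv ℝ F (x + h • u) (x' - x)|
            ≤ ‖fderiv ℝ F (x + h • u)‖ * ‖x' - x‖ :=
              (fderiv ℝ F (x + h • u)).le_opNorm (x' - x)
          _ ≤ L * ‖x' - x‖ := mul_le_mul_of_nonneg_right (hDle _) (norm_nonneg _)
      have hφle : |φ x' u| ≤ 2 * L * ‖x' - x‖ := by
        calc |φ x' u| ≤ |F (x' + h • u) - F (x + h • u)| + |fderiv ℝ F (x + h • u) (x' - x)| :=
              abs_sub _ _
          _ ≤ L * ‖x' - x‖ + L * ‖x' - x‖ := add_le_add h1 h2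
          _ = 2 * L * ‖x' - x‖ := by ring
      have hgnn : 0 ≤ g x' u := by
        rw [hg]
        positivity
      rw [Real.norm_eq_abs, abs_of_nonneg hgnn]
      rcases eq_or_ne x' x with rfl | hne
      · have hzero : g x' u = 0 := by simp [hg, hφ]
        rw [hzero]
        positivity
      · have hpos : (0 : ℝ) < ‖x' - x‖ := by
          rw [norm_pos_iff]
          exact sub_ne_zero_of_ne hne
        calc g x' u ≤ ‖x' - x‖⁻¹ * (2 * L * ‖x' - x‖) :=
              mul_le_mul_of_nonneg_left hφle (by positivity)
          _ = 2 * L := by field_simp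
    · exact integrableOn_const hBfin
    · filter_upwards [hae] with u hu
      have hT : Filter.Tendsto (fun x' : EuclideanSpace ℝ (Fin d) => x' + h • u)
          (nhds x) (nhds (x + h • u)) := (continuous_id.add continuous_const).tendsto x
      have hcomp := (hasFDerivAt_iff_tendsto.1 hu.hasFDerivAt).comp hT
      have heq : (fun x' : EuclideanSpace ℝ (Fin d) => ‖x' + h • u - (x + h • u)‖⁻¹ *
          ‖F (x' + h • u) - F (x + h • u) - fderiv ℝ F (x + h • u) (x' + h • u - (x + h • u))‖)
          = fun x' => g x' u := by
        funext x'
        simp [hg, hφ, add_sub_add_right_eq_sub, Real.norm_eq_abs]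
      rw [← heq]
      exact hcomp
  -- conclude
  have main : Filter.Tendsto
      (fun x' : EuclideanSpace ℝ (Fin d) =>
        ‖x' - x‖⁻¹ * ‖ballSmooth F h x' - ballSmooth F h x - (c • J) (x' - x)‖)
      (nhds x) (nhds 0) := by
    have hmul : Filter.Tendsto (fun x' : EuclideanSpace ℝ (Fin d) => |c| * ∫ u in B, g x' u)
        (nhds x) (nhds (|c| * 0)) := hDCT.const_mul _
    rw [mul_zero] at hmul
    apply squeeze_zero (fun x' => by positivity) _ hmul
    intro x'
    rw [key x']
    have h1 : ‖c * ∫ u in B, φ x' u‖ ≤ |c| * ∫ u in B, |φ x' u| := by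
      rw [Real.norm_eq_abs, abs_mul]
      apply mul_le_mul_of_nonneg_left _ (abs_nonneg c)
      simpa [Real.norm_eq_abs] using norm_integral_le_integral_norm (fun u => φ x' u)
    calc ‖x' - x‖⁻¹ * ‖c * ∫ u in B, φ x' u‖
        ≤ ‖x' - x‖⁻¹ * (|c| * ∫ u in B, |φ x' u|) :=
          mul_le_mul_of_nonneg_left h1 (by positivity)
      _ = |c| * ∫ u in B, g x' u := by
          simp only [hg]
          rw [integral_const_mul]
          ring
  exact (hasFDerivAt_iff_tendsto.2 main).differentiableAt
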